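/- In the Tits cone of a Coxeter system (W,S), the stabilizer of any point x in the closed fundamental chamber C̄₀ is the parabolic subgroup W_{Γ(x)} generated by the simple reflections fixing x, i.e. Γ(x) = {s ∈ S : s·x = x}. -/

import Mathlib

set_option linter.unusedSectionVars false
set_option maxHeartbeats 800000


/-- The coefficients `k(s,t) = -cos(π / m(s,t))` of the bilinear form associated to a Coxeter
matrix, with the convention `k(s,t) = -1` when `m(s,t) = ∞` (encoded by `M s t = 0`). -/
noncomputable def coxCoeff {B : Type*} (M : CoxeterMatrix B) (s t : B) : ℝ :=
  if M s t = 0 then -1 else -Real.cos (Real.pi / (M s t))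

/-- The canonical symmetric bilinear form of a Coxeter matrix on `ℝ^S`, with
`B(α_s, α_t) = -cos(π / m(s,t))` on the standard basis vectors `α_s`. -/
noncomputable def coxForm {B : Type*} [Fintype B] (M : CoxeterMatrix B) (x y : B → ℝ) : ℝ :=
  ∑ s, ∑ t, x s * y t * coxCoeff M s t

/-- The simple root `α_s`, a standard basis vector of `ℝ^S`. -/
noncomputable def simpleRoot {B : Type*} [DecidableEq B] (s : B) : B → ℝ := Pi.single s 1

/-- The open fundamental chamber `C₀ = {x : B(x, α_s) > 0 for all s}` of the Tits
representation. -/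
noncomputable def fundamentalChamber {B : Type*} [Fintype B] [DecidableEq B]
    (M : CoxeterMatrix B) : Set (B → ℝ) :=
  {x | ∀ s, 0 < coxForm M x (simpleRoot s)}

/-- The Tits cone `U = ⋃_{w ∈ W} w · C̄₀` associated to a representation `ρ` of `W` on `ℝ^S`. -/
noncomputable def titsCone {B W : Type*} [Fintype B] [DecidableEq B] [Group W]
    (M : CoxeterMatrix B) (ρ : W →* ((B → ℝ) ≃ₗ[ℝ] (B → ℝ))) : Set (B → ℝ) :=
  ⋃ w : W, (ρ w) '' (closure (fundamentalChamber M))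

/-- The assertion that `ρ` is the Tits (geometric) representation of the Coxeter system `cs`:
each simple reflection `s` acts by `x ↦ x - 2 B(x, α_s) α_s`. -/
def IsTitsRepresentation {B W : Type*} [Fintype B] [DecidableEq B] [Group W]
    (M : CoxeterMatrix B) (cs : CoxeterSystem M W)
    (ρ : W →* ((B → ℝ) ≃ₗ[ℝ] (B → ℝ))) : Prop :=
  ∀ (s : B) (x : B → ℝ),
    ρ (cs.simple s) x = x - (2 * coxForm M x (simpleRoot s)) • simpleRoot s

set_option linter.unusedSectionVars false
set_option maxHeartbeats 800000

section bil
variable {B : Type*} [Fintype B] [DecidableEq B] (M : CoxeterMatrix B)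

theorem coxCoeff_symm (a b : B) : coxCoeff M a b = coxCoeff M b a := by
  unfold coxCoeff; rw [M.symmetric a b]

theorem coxCoeff_self (a : B) : coxCoeff M a a = 1 := by
  unfold coxCoeff; rw [M.diagonal a]; norm_num

theorem coxForm_symm (x y : B → ℝ) : coxForm M x y = coxForm M y x := by
  unfold coxForm; rw [Finset.sum_comm]
  refine Finset.sum_congr rfl fun s _ => Finset.sum_congr rfl fun t _ => ?_
  rw [coxCoeff_symm]; ring

theorem coxForm_single_single (a b : B) :
    coxForm M (simpleRoot a) (simpleRoot b) = coxCoeff M a b := by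
  unfold coxForm simpleRoot
  simp [Pi.single_apply]

theorem coxForm_add_left (x y z : B → ℝ) :
    coxForm M (x + y) z = coxForm M x z + coxForm M y z := by
  unfold coxForm
  rw [← Finset.sum_add_distrib]
  refine Finset.sum_congr rfl fun s _ => ?_
  rw [← Finset.sum_add_distrib]
  exact Finset.sum_congr rfl fun t _ => by simp [add_mul]

theorem coxForm_smul_left (c : ℝ) (x z : B → ℝ) :
    coxForm M (c • x) z = c * coxForm M x z := by
  unfold coxForm
  rw [Finset.mul_sum]
  refine Finset.sum_congr rfl fun s _ => ?_
  rw [Finset.mul_sum]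
  exact Finset.sum_congr rfl fun t _ => by simp; ring

theorem coxForm_add_right (x y z : B → ℝ) :
    coxForm M x (y + z) = coxForm M x y + coxForm M x z := by
  rw [coxForm_symm, coxForm_add_left, coxForm_symm M y x, coxForm_symm M z x]

theorem coxForm_smul_right (c : ℝ) (x z : B → ℝ) :
    coxForm M x (c • z) = c * coxForm M x z := by
  rw [coxForm_symm, coxForm_smul_left, coxForm_symm M z x]

theorem coxForm_sub_left (x y z : B → ℝ) :
    coxForm M (x - y) z = coxForm M x z - coxForm M y z := by
  have := coxForm_add_left M (x - y) y z; simp at this; linarith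

theorem coxForm_sub_right (x y z : B → ℝ) :
    coxForm M x (y - z) = coxForm M x y - coxForm M x z := by
  rw [coxForm_symm, coxForm_sub_left, coxForm_symm M y x, coxForm_symm M z x]

theorem coxForm_expand_right (x y : B → ℝ) :
    coxForm M x y = ∑ t, y t * coxForm M x (simpleRoot t) := by
  unfold coxForm
  rw [Finset.sum_comm]
  refine Finset.sum_congr rfl fun t _ => ?_
  rw [Finset.mul_sum]
  refine Finset.sum_congr rfl fun s _ => ?_
  unfold simpleRoot
  simp [Pi.single_apply]
  ring

theorem continuous_coxForm_left (y : B → ℝ) : Continuous fun x => coxForm M x y := by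
  unfold coxForm
  exact continuous_finset_sum _ fun s _ => continuous_finset_sum _ fun t _ =>
    ((continuous_apply s).mul continuous_const).mul continuous_const

end bil

section rep

variable {B W : Type*} [Fintype B] [DecidableEq B] [Group W]
  (M : CoxeterMatrix B) (cs : CoxeterSystem M W)
  (ρ : W →* ((B → ℝ) ≃ₗ[ℝ] (B → ℝ))) (hρ : IsTitsRepresentation M cs ρ)

include hρ

/-- Invariance of the form under a single simple reflection. -/
theorem coxForm_simple_invariant (i : B) (x y : B → ℝ) :
    coxForm M (ρ (cs.simple i) x) (ρ (cs.simple i) y) = coxForm M x y := by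
  rw [hρ i x, hρ i y]
  simp only [coxForm_sub_left, coxForm_sub_right, coxForm_smul_left, coxForm_smul_right,
    coxForm_single_single, coxCoeff_self]
  rw [coxForm_symm M (simpleRoot i) y]
  ring

/-- Invariance of the form under the whole group. -/
theorem coxForm_invariant (w : W) : ∀ (x y : B → ℝ),
    coxForm M (ρ w x) (ρ w y) = coxForm M x y := by
  induction w using cs.simple_induction_left with
  | one => simp
  | mul_simple_left w i ih =>
    intro x y
    rw [map_mul]
    have hx : (ρ (cs.simple i) * ρ w) x = ρ (cs.simple i) (ρ w x) := rfl
    have hy : (ρ (cs.simple i) * ρ w) y = ρ (cs.simple i) (ρ w y) := rfl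
    rw [hx, hy, coxForm_simple_invariant M cs ρ hρ, ih]

end rep

/-- The auxiliary sequence `sin (k π / m) / sin (π / m)` (or `k` if `m = ∞`). -/
noncomputable def coxS {B : Type*} (M : CoxeterMatrix B) (i j : B) (k : ℕ) : ℝ :=
  if M i j = 0 then (k : ℝ)
  else Real.sin (k * (Real.pi / (M i j))) / Real.sin (Real.pi / (M i j))

section S
variable {B : Type*} (M : CoxeterMatrix B) {i j : B}

theorem two_le_M (hij : i ≠ j) (hm : M i j ≠ 0) : 2 ≤ M i j := by
  have h1 := M.off_diagonal i j hij
  omega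

theorem sin_pos_of_M (hij : i ≠ j) (hm : M i j ≠ 0) :
    0 < Real.sin (Real.pi / (M i j)) := by
  have h2 : (2 : ℝ) ≤ (M i j : ℝ) := by exact_mod_cast two_le_M M hij hm
  have hpi := Real.pi_pos
  apply Real.sin_pos_of_pos_of_lt_pi
  · positivity
  · have : Real.pi / (M i j : ℝ) ≤ Real.pi / 2 := by gcongr
    linarith

theorem coxS_zero : coxS M i j 0 = 0 := by simp [coxS]

theorem coxS_one (hij : i ≠ j) : coxS M i j 1 = 1 := by
  unfold coxS
  split_ifs with h
  · norm_num
  · rw [Nat.cast_one, one_mul, div_self (sin_pos_of_M M hij h).ne']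

theorem coxS_rec (hij : i ≠ j) (k : ℕ) :
    coxS M i j (k + 2) = 2 * (-coxCoeff M i j) * coxS M i j (k + 1) - coxS M i j k := by
  unfold coxS coxCoeff
  split_ifs with h
  · push_cast; ring
  · set θ := Real.pi / (M i j : ℝ)
    have hs := (sin_pos_of_M M hij h).ne'
    rw [neg_neg]
    field_simp
    have h1 : ((k : ℝ) + 2) * θ = ((k : ℝ) + 1) * θ + θ := by ring
    have h2 : (k : ℝ) * θ = ((k : ℝ) + 1) * θ - θ := by ring
    push_cast
    rw [h1, show θ * (k : ℝ) = ((k : ℝ) + 1) * θ - θ by ring,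
      show θ * ((k : ℝ) + 1) = ((k : ℝ) + 1) * θ by ring, Real.sin_add, Real.sin_sub]
    ring

theorem coxS_nonneg (hij : i ≠ j) (k : ℕ) (hk : M i j = 0 ∨ k ≤ M i j) :
    0 ≤ coxS M i j k := by
  unfold coxS
  split_ifs with h
  · positivity
  · rcases hk with hk | hk
    · exact absurd hk h
    apply div_nonneg _ (sin_pos_of_M M hij h).le
    apply Real.sin_nonneg_of_nonneg_of_le_pi
    · positivity
    · have hMpos : (0 : ℝ) < (M i j : ℝ) := by
        exact_mod_cast Nat.pos_of_ne_zero h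
      have hkM : (k : ℝ) ≤ (M i j : ℝ) := by exact_mod_cast hk
      have : (k : ℝ) * (Real.pi / (M i j : ℝ)) ≤ (M i j : ℝ) * (Real.pi / (M i j : ℝ)) := by
        apply mul_le_mul_of_nonneg_right hkM (by positivity)
      calc (k : ℝ) * (Real.pi / (M i j : ℝ)) ≤ (M i j : ℝ) * (Real.pi / (M i j : ℝ)) := this
        _ = Real.pi := by field_simp
end S

section ranktwo
variable {B W : Type*} [Fintype B] [DecidableEq B] [Group W]
  {M : CoxeterMatrix B} (cs : CoxeterSystem M W)
  (ρ : W →* ((B → ℝ) ≃ₗ[ℝ] (B → ℝ))) (hρ : IsTitsRepresentation M cs ρ)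

include hρ

theorem rho_alt_apply {i j : B} (hij : i ≠ j) (k : ℕ) :
    ρ (cs.wordProd (CoxeterSystem.alternatingWord i j k)) (simpleRoot i)
      = (if Even k then coxS M i j (k+1) else coxS M i j k) • simpleRoot i
        + (if Even k then coxS M i j k else coxS M i j (k+1)) • simpleRoot j := by
  induction k with
  | zero =>
    rw [show CoxeterSystem.alternatingWord i j 0 = [] from rfl, cs.wordProd_nil, map_one]
    rw [if_pos (Even.zero), if_pos (Even.zero), coxS_one M hij, coxS_zero]
    simp
  | succ k ih =>
    rw [CoxeterSystem.alternatingWord_succ', cs.wordProd_cons, map_mul]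
    have hmul : ∀ v, (ρ (cs.simple (if Even k then j else i)) *
        ρ (cs.wordProd (CoxeterSystem.alternatingWord i j k))) v
        = ρ (cs.simple (if Even k then j else i))
          (ρ (cs.wordProd (CoxeterSystem.alternatingWord i j k)) v) := fun _ => rfl
    rw [hmul, ih]
    by_cases hk : Even k
    · have hk1 : ¬ Even (k+1) := by simp [Nat.even_add_one, hk]
      simp only [hk, if_true, hk1, if_false]
      rw [hρ j _]
      rw [coxForm_add_left, coxForm_smul_left, coxForm_smul_left, coxForm_single_single,
        coxForm_single_single, coxCoeff_self, coxS_rec M hij k]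
      module
    · have hk1 : Even (k+1) := by simp [Nat.even_add_one, hk]
      simp only [hk, if_false, hk1, if_true]
      rw [hρ i _]
      rw [coxForm_add_left, coxForm_smul_left, coxForm_smul_left, coxForm_single_single,
        coxForm_single_single, coxCoeff_self, coxCoeff_symm M j i, coxS_rec M hij k]
      module

theorem rho_alt_nonneg {i j : B} (hij : i ≠ j) (k : ℕ) (hk : M i j = 0 ∨ k + 1 ≤ M i j) :
    ∃ a b : ℝ, 0 ≤ a ∧ 0 ≤ b ∧
      ρ (cs.wordProd (CoxeterSystem.alternatingWord i j k)) (simpleRoot i)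
        = a • simpleRoot i + b • simpleRoot j := by
  refine ⟨_, _, ?_, ?_, rho_alt_apply cs ρ hρ hij k⟩ <;>
    split_ifs <;>
    apply coxS_nonneg M hij <;>
    [skip; skip; skip; skip] <;>
    exact hk.imp id (by omega)

end ranktwo

section comb
variable {B W : Type*} [Group W] {M : CoxeterMatrix B} (cs : CoxeterSystem M W)

open CoxeterSystem

theorem P_succ_right (i j : B) (k : ℕ) :
    cs.wordProd (alternatingWord i j (k+1))
      = cs.wordProd (alternatingWord j i k) * cs.simple j := by
  rw [alternatingWord_succ, cs.wordProd_concat]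

theorem P_succ_left (i j : B) (k : ℕ) :
    cs.wordProd (alternatingWord i j (k+1))
      = cs.simple (if Even k then j else i) * cs.wordProd (alternatingWord i j k) := by
  rw [alternatingWord_succ', cs.wordProd_cons]

theorem P_cancel_right (i j : B) (k : ℕ) :
    cs.wordProd (alternatingWord i j (k+1)) * cs.simple j
      = cs.wordProd (alternatingWord j i k) := by
  rw [P_succ_right, cs.simple_mul_simple_cancel_right]

theorem P_one (i j : B) : cs.wordProd (alternatingWord i j 1) = cs.simple j := by
  rw [show alternatingWord i j 1 = [j] from rfl, cs.wordProd_singleton]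

theorem leftMulP (i j c : B) (k : ℕ) (hij : i ≠ j) (hc : c = i ∨ c = j) :
    ∃ k', k' ≤ k + 1 ∧
      (cs.simple c * cs.wordProd (alternatingWord i j k) = cs.wordProd (alternatingWord i j k')
      ∨ cs.simple c * cs.wordProd (alternatingWord i j k)
          = cs.wordProd (alternatingWord j i k')) := by
  by_cases hceq : c = (if Even k then j else i)
  · exact ⟨k+1, by omega, Or.inl (by rw [hceq, ← P_succ_left])⟩
  · match k with
    | 0 =>
      have hci : c = i := by
        rcases hc with h | h
        · exact h
        · simp only [Even.zero, if_true] at hceq; exact absurd h hceq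
      refine ⟨1, by omega, Or.inr ?_⟩
      rw [show alternatingWord i j 0 = ([] : List B) from rfl, cs.wordProd_nil, mul_one,
        P_one, hci]
    | k + 1 =>
      have hc0 : c = (if Even k then j else i) := by
        by_cases hk : Even k <;>
          simp only [hk, Nat.even_add_one, not_true, not_false_iff, if_true, if_false] at hceq ⊢ <;>
          tauto
      refine ⟨k, by omega, Or.inl ?_⟩
      rw [P_succ_left, hc0, cs.simple_mul_simple_cancel_left]

theorem reduceP : ∀ (k : ℕ) (i j : B), i ≠ j → M i j ≠ 0 → M i j + 1 ≤ k →
    ∃ k', k' < k ∧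
      (cs.wordProd (alternatingWord i j k) = cs.wordProd (alternatingWord i j k')
      ∨ cs.wordProd (alternatingWord i j k) = cs.wordProd (alternatingWord j i k')) := by
  intro k
  induction k using Nat.strong_induction_on with
  | _ k IH =>
  intro i j hij hm hk
  have hMsymm : M j i = M i j := (M.symmetric i j).symm
  rcases eq_or_lt_of_le hk with heq | hlt
  · -- k = M i j + 1
    obtain ⟨m', hm'⟩ : ∃ m', M i j = m' + 1 := ⟨M i j - 1, by omega⟩
    refine ⟨m', by omega, Or.inr ?_⟩
    have h1 : cs.wordProd (alternatingWord i j k)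
        = cs.wordProd (alternatingWord j i (M i j)) * cs.simple j := by
      rw [← heq, P_succ_right]
    have h2 : cs.wordProd (alternatingWord j i (M i j))
        = cs.wordProd (alternatingWord i j (M i j)) := by
      have := cs.wordProd_braidWord_eq j i
      unfold CoxeterSystem.braidWord at this
      rwa [hMsymm] at this
    rw [h1, h2, hm', P_cancel_right]
  · -- k ≥ M i j + 2
    obtain ⟨k1, rfl⟩ : ∃ k1, k = k1 + 1 := ⟨k-1, by omega⟩
    obtain ⟨k'', hk'', hcase⟩ := IH k1 (by omega) j i hij.symm (by omega) (by omega)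
    rcases hcase with h | h
    · refine ⟨k''+1, by omega, Or.inl ?_⟩
      rw [P_succ_right, h, ← P_succ_right]
    · match k'' with
      | 0 =>
        refine ⟨1, by omega, Or.inl ?_⟩
        rw [P_succ_right, h, show alternatingWord i j 0 = ([] : List B) from rfl,
          cs.wordProd_nil, one_mul, P_one]
      | r + 1 =>
        refine ⟨r, by omega, Or.inr ?_⟩
        rw [P_succ_right, h, P_cancel_right]
end comb



section main
open CoxeterSystem
variable {B W : Type*} [Fintype B] [DecidableEq B] [Group W]
  {M : CoxeterMatrix B} (cs : CoxeterSystem M W)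
  (ρ : W →* ((B → ℝ) ≃ₗ[ℝ] (B → ℝ))) (hρ : IsTitsRepresentation M cs ρ)

include hρ

theorem rootPos : ∀ (n : ℕ) (w : W), cs.length w = n → ∀ s : B, ¬ cs.IsRightDescent w s →
    ∀ i0 : B, 0 ≤ ρ w (simpleRoot s) i0 := by
  intro n
  induction n using Nat.strong_induction_on with
  | _ n IH =>
  intro w hn s hs i0
  rcases eq_or_ne w 1 with rfl | hw
  · rw [map_one]
    have h1 : (1 : ((B → ℝ) ≃ₗ[ℝ] (B → ℝ))) (simpleRoot s) = simpleRoot s := rfl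
    rw [h1]
    unfold simpleRoot
    rw [Pi.single_apply]
    split <;> norm_num
  · obtain ⟨t, ht⟩ := cs.exists_rightDescent_of_ne_one hw
    have hts : t ≠ s := by rintro rfl; exact hs ht
    set A : Set W := {u | ∃ k : ℕ,
      (u⁻¹ * w = cs.wordProd (alternatingWord s t k)
        ∨ u⁻¹ * w = cs.wordProd (alternatingWord t s k))
      ∧ cs.length u + k = cs.length w} with hA
    have hwA : w ∈ A := ⟨0, Or.inl (by
      rw [inv_mul_cancel, show alternatingWord s t 0 = ([] : List B) from rfl,
        cs.wordProd_nil]), by omega⟩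
    have hLne : (cs.length '' A).Nonempty := ⟨_, w, hwA, rfl⟩
    obtain ⟨u, huA, hulen⟩ := Nat.sInf_mem hLne
    have hmin : ∀ u' ∈ A, cs.length u ≤ cs.length u' := fun u' h => by
      rw [hulen]; exact Nat.sInf_le ⟨u', h, rfl⟩
    have hC1 : ∀ c, (c = s ∨ c = t) → ¬ cs.IsRightDescent u c := by
      intro c hc hdesc
      obtain ⟨k, hform, hsum⟩ := huA
      have hveq : (u * cs.simple c)⁻¹ * w = cs.simple c * (u⁻¹ * w) := by
        rw [mul_inv_rev, cs.inv_simple, mul_assoc]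
      have hred : ∃ k', k' ≤ k + 1 ∧
          ((u * cs.simple c)⁻¹ * w = cs.wordProd (alternatingWord s t k') ∨
           (u * cs.simple c)⁻¹ * w = cs.wordProd (alternatingWord t s k')) := by
        rcases hform with h | h
        · obtain ⟨k', hle, hd⟩ := leftMulP cs s t c k (Ne.symm hts) hc
          exact ⟨k', hle, by rw [hveq, h]; exact hd⟩
        · obtain ⟨k', hle, hd⟩ := leftMulP cs t s c k hts (Or.symm hc)
          exact ⟨k', hle, by rw [hveq, h]; exact Or.symm hd⟩
      obtain ⟨k', hk'le, hd⟩ := hred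
      have hlu' : cs.length (u * cs.simple c) + 1 = cs.length u := by
        rcases cs.length_mul_simple u c with h | h
        · unfold CoxeterSystem.IsRightDescent at hdesc; omega
        · exact h
      have hlenred : cs.length ((u * cs.simple c)⁻¹ * w) ≤ k' := by
        rcases hd with h | h <;> rw [h] <;>
          exact le_trans (cs.length_wordProd_le _) (by rw [length_alternatingWord])
      have hub : cs.length w ≤ cs.length (u * cs.simple c) + k' := by
        have h1 : w = (u * cs.simple c) * ((u * cs.simple c)⁻¹ * w) := by group
        calc cs.length w = cs.length ((u * cs.simple c) * ((u * cs.simple c)⁻¹ * w)) := by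
              rw [← h1]
          _ ≤ cs.length (u * cs.simple c) + cs.length ((u * cs.simple c)⁻¹ * w) :=
              cs.length_mul_le _ _
          _ ≤ cs.length (u * cs.simple c) + k' := by omega
      have heq2 : cs.length (u * cs.simple c) + k' = cs.length w := by omega
      have hmem : u * cs.simple c ∈ A := ⟨k', hd, heq2⟩
      have := hmin _ hmem
      omega
    obtain ⟨k, hform, hsum⟩ := huA
    have hk1 : 1 ≤ k := by
      by_contra hk0
      have hk0' : k = 0 := by omega
      subst hk0'
      have hone : u⁻¹ * w = 1 := by
        rcases hform with h | h <;>
          rw [h, show alternatingWord _ _ 0 = ([] : List B) from rfl, cs.wordProd_nil]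
      have huw : u = w := inv_mul_eq_one.mp hone
      exact hC1 t (Or.inr rfl) (huw ▸ ht)
    have hwuv : w = u * (u⁻¹ * w) := by group
    have hts_form : ∀ k0 : ℕ, 1 ≤ k0 → cs.length u + k0 = cs.length w →
        u⁻¹ * w = cs.wordProd (alternatingWord t s k0) → False := by
      intro k0 h1 hsum0 h
      obtain ⟨r, rfl⟩ : ∃ r, k0 = r + 1 := ⟨k0 - 1, by omega⟩
      have hcancel : (u⁻¹ * w) * cs.simple s = cs.wordProd (alternatingWord s t r) := by
        rw [h, P_cancel_right]
      have hlen3 : cs.length ((u⁻¹ * w) * cs.simple s) ≤ r := by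
        rw [hcancel]
        exact le_trans (cs.length_wordProd_le _) (by rw [length_alternatingWord])
      have hlews : cs.length (w * cs.simple s) < cs.length w := by
        have h2 : w * cs.simple s = u * ((u⁻¹ * w) * cs.simple s) := by group
        calc cs.length (w * cs.simple s)
            = cs.length (u * ((u⁻¹ * w) * cs.simple s)) := by rw [← h2]
          _ ≤ cs.length u + cs.length ((u⁻¹ * w) * cs.simple s) := cs.length_mul_le _ _
          _ < cs.length w := by omega
      exact hs hlews
    have hform' : u⁻¹ * w = cs.wordProd (alternatingWord s t k) := by
      rcases hform with h | h
      · exact h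
      · exact (hts_form k hk1 hsum h).elim
    have hbound : M s t = 0 ∨ k + 1 ≤ M s t := by
      by_cases hm0 : M s t = 0
      · exact Or.inl hm0
      right
      by_contra hcon
      push_neg at hcon
      rcases eq_or_lt_of_le (show M s t ≤ k by omega) with heq | hlt2
      · have e2 : M t s = M s t := M.symmetric t s
        have e1 := cs.wordProd_braidWord_eq s t
        rw [CoxeterSystem.braidWord, CoxeterSystem.braidWord, e2, heq] at e1
        exact hts_form k hk1 hsum (hform'.trans e1)
      · obtain ⟨k', hk'lt, hred⟩ := reduceP cs k s t (Ne.symm hts) hm0 (by omega)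
        have hlen4 : cs.length (u⁻¹ * w) ≤ k' := by
          rcases hred with h | h <;> rw [hform', h] <;>
            exact le_trans (cs.length_wordProd_le _) (by rw [length_alternatingWord])
        have : cs.length w ≤ cs.length u + cs.length (u⁻¹ * w) := by
          calc cs.length w = cs.length (u * (u⁻¹ * w)) := by rw [← hwuv]
            _ ≤ cs.length u + cs.length (u⁻¹ * w) := cs.length_mul_le _ _
        omega
    have hus := IH (cs.length u) (by omega) u rfl s (hC1 s (Or.inl rfl))
    have hut := IH (cs.length u) (by omega) u rfl t (hC1 t (Or.inr rfl))
    obtain ⟨a, b, ha, hb, hcombo⟩ := rho_alt_nonneg cs ρ hρ (Ne.symm hts) k hbound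
    have hfinal : ρ w (simpleRoot s)
        = a • (ρ u (simpleRoot s)) + b • (ρ u (simpleRoot t)) := by
      conv_lhs => rw [hwuv]
      rw [map_mul]
      have h5 : (ρ u * ρ (u⁻¹ * w)) (simpleRoot s)
          = ρ u (ρ (u⁻¹ * w) (simpleRoot s)) := rfl
      rw [h5, hform', hcombo, map_add, map_smul, map_smul]
    rw [hfinal]
    simp only [Pi.add_apply, Pi.smul_apply, smul_eq_mul]
    exact add_nonneg (mul_nonneg ha (hus i0)) (mul_nonneg hb (hut i0))

end main

section final
open CoxeterSystem
variable {B W : Type*} [Fintype B] [DecidableEq B] [Group W]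
  {M : CoxeterMatrix B} (cs : CoxeterSystem M W)
  (ρ : W →* ((B → ℝ) ≃ₗ[ℝ] (B → ℝ))) (hρ : IsTitsRepresentation M cs ρ)

theorem chamber_nonneg {x : B → ℝ} (hx : x ∈ closure (fundamentalChamber M)) (t : B) :
    0 ≤ coxForm M x (simpleRoot t) := by
  have hclosed : IsClosed {y : B → ℝ | 0 ≤ coxForm M y (simpleRoot t)} :=
    isClosed_le continuous_const (continuous_coxForm_left M _)
  exact closure_minimal (fun y hy => (hy t).le) hclosed hx

include hρ

theorem rho_simple_self (i : B) : ρ (cs.simple i) (simpleRoot i) = - simpleRoot i := by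
  rw [hρ i (simpleRoot i), coxForm_single_single, coxCoeff_self]
  module

theorem stab_key {x : B → ℝ} (hx : x ∈ closure (fundamentalChamber M)) :
    ∀ (n : ℕ) (w : W), cs.length w = n → ρ w x = x →
      w ∈ Subgroup.closure (cs.simple '' {s : B | ρ (cs.simple s) x = x}) := by
  intro n
  induction n using Nat.strong_induction_on with
  | _ n IH =>
  intro w hn hwx
  rcases eq_or_ne w 1 with rfl | hw
  · exact Subgroup.one_mem _
  obtain ⟨si, hsd⟩ := cs.exists_leftDescent_of_ne_one hw
  set u := w⁻¹ * cs.simple si with hu_def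
  have huw : u * cs.simple si = w⁻¹ := by
    rw [hu_def, cs.simple_mul_simple_cancel_right]
  have hlu : cs.length u = cs.length (cs.simple si * w) := by
    have : u = (cs.simple si * w)⁻¹ := by
      rw [mul_inv_rev, cs.inv_simple]
    rw [this, cs.length_inv]
  have hnd : ¬ cs.IsRightDescent u si := by
    unfold CoxeterSystem.IsRightDescent
    rw [huw, cs.length_inv, hlu]
    unfold CoxeterSystem.IsLeftDescent at hsd
    omega
  have hpos := rootPos cs ρ hρ (cs.length u) u rfl si hnd
  have hneg : ∀ i0, ρ w⁻¹ (simpleRoot si) i0 ≤ 0 := by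
    intro i0
    have h1 : ρ w⁻¹ (simpleRoot si) = - ρ u (simpleRoot si) := by
      rw [← huw, map_mul]
      have h2 : (ρ u * ρ (cs.simple si)) (simpleRoot si)
          = ρ u (ρ (cs.simple si) (simpleRoot si)) := rfl
      rw [h2, rho_simple_self cs ρ hρ si, map_neg]
    rw [h1, Pi.neg_apply]
    linarith [hpos i0]
  have hwinv : ρ w⁻¹ x = x := by
    calc ρ w⁻¹ x = ρ w⁻¹ (ρ w x) := by rw [hwx]
      _ = ρ (w⁻¹ * w) x := by rw [map_mul]; rfl
      _ = x := by rw [inv_mul_cancel, map_one]; rfl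
  have hBzero : coxForm M x (simpleRoot si) = 0 := by
    have h1 : coxForm M x (ρ w⁻¹ (simpleRoot si)) = coxForm M x (simpleRoot si) := by
      conv_lhs => rw [← hwinv]
      exact coxForm_invariant M cs ρ hρ w⁻¹ x (simpleRoot si)
    have h2 : coxForm M x (ρ w⁻¹ (simpleRoot si)) ≤ 0 := by
      rw [coxForm_expand_right]
      apply Finset.sum_nonpos
      intro t0 _
      have := mul_nonneg (neg_nonneg.2 (hneg t0)) (chamber_nonneg hx t0)
      nlinarith
    have h3 := chamber_nonneg hx si
    linarith
  have hfix : ρ (cs.simple si) x = x := by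
    rw [hρ si x, hBzero]
    simp
  have hmemgen : cs.simple si ∈ Subgroup.closure (cs.simple '' {s : B | ρ (cs.simple s) x = x}) :=
    Subgroup.subset_closure ⟨si, hfix, rfl⟩
  have hw2 : ρ (cs.simple si * w) x = x := by
    calc ρ (cs.simple si * w) x = ρ (cs.simple si) (ρ w x) := by rw [map_mul]; rfl
      _ = x := by rw [hwx, hfix]
  have hlen : cs.length (cs.simple si * w) < n := hn ▸ hsd
  have hrec := IH _ hlen _ rfl hw2
  have hwe : w = cs.simple si * (cs.simple si * w) := by
    rw [cs.simple_mul_simple_cancel_left]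
  rw [hwe]
  exact Subgroup.mul_mem _ hmemgen hrec

theorem stab_final : ∀ x ∈ closure (fundamentalChamber M), ∀ w : W,
    ρ w x = x ↔
      w ∈ Subgroup.closure (cs.simple '' {s : B | ρ (cs.simple s) x = x}) := by
  intro x hx w
  constructor
  · intro hwx
    exact stab_key cs ρ hρ hx (cs.length w) w rfl hwx
  · intro hmem
    induction hmem using Subgroup.closure_induction with
    | mem g hg => obtain ⟨s0, hs0, rfl⟩ := hg; exact hs0
    | one => rw [map_one]; rfl
    | mul a b ha hb iha ihb =>
      calc ρ (a * b) x = ρ a (ρ b x) := by rw [map_mul]; rfl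
        _ = x := by rw [ihb, iha]
    | inv a ha iha =>
      calc ρ a⁻¹ x = ρ a⁻¹ (ρ a x) := by rw [iha]
        _ = ρ (a⁻¹ * a) x := by rw [map_mul]; rfl
        _ = x := by rw [inv_mul_cancel, map_one]; rfl

end final

/-- In the Tits cone of a Coxeter system `(W, S)`, the stabilizer of any point `x` of the
closed fundamental chamber `C̄₀` is the parabolic subgroup generated by the simple reflections
fixing `x`: for `w ∈ W`, one has `w · x = x` iff `w ∈ ⟨s ∈ S : s · x = x⟩`. -/
theorem stabilizer_of_chamber_point {B W : Type*} [Fintype B] [DecidableEq B] [Group W]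
    (M : CoxeterMatrix B) (cs : CoxeterSystem M W)
    (ρ : W →* ((B → ℝ) ≃ₗ[ℝ] (B → ℝ))) (hρ : IsTitsRepresentation M cs ρ) :
    ∀ x ∈ closure (fundamentalChamber M), ∀ w : W,
      ρ w x = x ↔
        w ∈ Subgroup.closure (cs.simple '' {s : B | ρ (cs.simple s) x = x}) := by
  intro x hx w
  exact stab_final cs ρ hρ x hx w
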